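/- arXiv:2406.15606 — 3 statements merged into one kernel-verified Lean document; each statement's English description precedes it below -/
import Mathlib

section
/- Let K be a Galois number field of degree n over ℚ, let E be an elliptic curve over ℚ, and let q be an odd prime power. Suppose E(K)[q] ≅ ℤ/qℤ and gcd(n, φ(q)) = 1, where φ is Euler's totient function. Then E(K)[q] = E(ℚ)[q], i.e., every point of E(K) of order dividing q is defined over ℚ. -/
open WeierstrassCurve WeierstrassCurve.Affine

open Classical in
private lemma map_one_aux (E : WeierstrassCurve ℚ) (K : Type) [Field K] [Algebra ℚ K]
    (P : Affine.Point (E.baseChange K)) : Affine.Point.map (W' := E) (AlgHom.id ℚ K) P = P := by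
  cases P <;> rfl

private lemma fixed_mem_range {K : Type} [Field K] [NumberField K] [IsGalois ℚ K]
    {x : K} (h : ∀ σ : K ≃ₐ[ℚ] K, σ x = x) : x ∈ Set.range (algebraMap ℚ K) := by
  have hx : x ∈ IntermediateField.fixedField (⊤ : Subgroup (K ≃ₐ[ℚ] K)) := fun σ => h σ
  rw [← IntermediateField.fixingSubgroup_bot (F := ℚ) (E := K), IsGalois.fixedField_fixingSubgroup] at hx
  exact IntermediateField.mem_bot.mp hx

open Classical in
/-- Let `K` be a Galois number field of degree `n` over `ℚ`, `E` an elliptic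
curve over `ℚ`, and `q` an odd prime power. If `E(K)[q] ≅ ℤ/qℤ` and `gcd(n, φ(q)) = 1`,
then `E(K)[q] = E(ℚ)[q]`. -/
theorem statement0 (E : WeierstrassCurve ℚ) [E.IsElliptic]
    (K : Type) [Field K] [NumberField K] [IsGalois ℚ K]
    (n : ℕ) (hn : Module.finrank ℚ K = n)
    (q : ℕ) (hq : IsPrimePow q) (hodd : Odd q)
    (hcyc : Nonempty ((Submodule.torsionBy ℤ (Affine.Point (E.baseChange K)) (q : ℤ)) ≃+ ZMod q))
    (hgcd : Nat.gcd n (Nat.totient q) = 1) :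
    Submodule.torsionBy ℤ (Affine.Point (E.baseChange K)) (q : ℤ) =
      Submodule.map (Affine.Point.map (W' := E) (Algebra.ofId ℚ K)).toIntLinearMap
        (Submodule.torsionBy ℤ (Affine.Point (E.baseChange ℚ)) (q : ℤ)) := by
  classical
  obtain ⟨e⟩ := hcyc
  set T := Submodule.torsionBy ℤ (Affine.Point (E.baseChange K)) (q : ℤ) with hT
  have hq1 : 1 < q := hq.one_lt
  have : NeZero q := ⟨by omega⟩
  -- the Galois action preserves torsion
  have hmem : ∀ (σ : K ≃ₐ[ℚ] K) (P : Affine.Point (E.baseChange K)), P ∈ T →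
      Affine.Point.map (W' := E) σ.toAlgHom P ∈ T := by
    intro σ P hP
    rw [hT, Submodule.mem_torsionBy_iff] at *
    rw [← map_zsmul, hP, map_zero]
  let A : (K ≃ₐ[ℚ] K) → T →+ T := fun σ =>
    AddMonoidHom.mk' (fun P => ⟨Affine.Point.map (W' := E) σ.toAlgHom P.1, hmem σ P.1 P.2⟩)
      (by intro P Q; exact Subtype.ext (map_add _ P.1 Q.1))
  let g : (K ≃ₐ[ℚ] K) → (ZMod q →+ ZMod q) := fun σ =>
    e.toAddMonoidHom.comp ((A σ).comp e.symm.toAddMonoidHom)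
  let c : (K ≃ₐ[ℚ] K) → ZMod q := fun σ => g σ 1
  have hlin : ∀ (f : ZMod q →+ ZMod q) (x : ZMod q), f x = x * f 1 := by
    intro f x
    have hx : ((x.val : ℕ) : ZMod q) = x := by rw [ZMod.natCast_val, ZMod.cast_id]
    calc f x = f (x.val • (1 : ZMod q)) := by rw [nsmul_eq_mul, mul_one, hx]
      _ = x.val • f 1 := by rw [map_nsmul]
      _ = x * f 1 := by rw [nsmul_eq_mul, hx]
  have hg : ∀ σ x, g σ x = x * c σ := fun σ x => hlin (g σ) x
  have hAmul : ∀ (σ τ : K ≃ₐ[ℚ] K) (P : T), A (σ * τ) P = A σ (A τ P) := by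
    intro σ τ P
    refine Subtype.ext ?_
    have hcomp : (σ * τ).toAlgHom = σ.toAlgHom.comp τ.toAlgHom := by ext x; rfl
    show Affine.Point.map (W' := E) (σ * τ).toAlgHom P.1 = _
    rw [hcomp, ← Affine.Point.map_map]
    rfl
  have hmul : ∀ σ τ, c (σ * τ) = c τ * c σ := by
    intro σ τ
    have : c (σ * τ) = g σ (c τ) := by
      show e (A (σ * τ) (e.symm 1)) = e (A σ (e.symm (e (A τ (e.symm 1)))))
      rw [e.symm_apply_apply, hAmul]
    rw [this, hg]
  have hone : c 1 = 1 := by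
    have hA1 : ∀ P : T, A 1 P = P := by
      intro P
      refine Subtype.ext ?_
      show Affine.Point.map (W' := E) (1 : K ≃ₐ[ℚ] K).toAlgHom P.1 = P.1
      exact map_one_aux E K P.1
    show e (A 1 (e.symm 1)) = 1
    rw [hA1, e.apply_symm_apply]
  have hpow : ∀ (σ : K ≃ₐ[ℚ] K) (m : ℕ), c (σ ^ m) = c σ ^ m := by
    intro σ m
    induction m with
    | zero => simpa using hone
    | succ m ih => rw [pow_succ, hmul, ih, pow_succ, mul_comm]
  have hcard : Fintype.card (K ≃ₐ[ℚ] K) = n := by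
    rw [← Nat.card_eq_fintype_card, IsGalois.card_aut_eq_finrank, hn]
  have hn0 : n ≠ 0 := by
    rw [← hcard]; exact Fintype.card_pos.ne'
  have hc1 : ∀ σ : K ≃ₐ[ℚ] K, c σ = 1 := by
    intro σ
    have hσn : σ ^ n = 1 := by rw [← hcard]; exact pow_card_eq_one
    have hcn : c σ ^ n = 1 := by rw [← hpow, hσn, hone]
    have hu : IsUnit (c σ) := IsUnit.of_pow_eq_one hcn hn0
    have hun : hu.unit ^ n = 1 := by
      ext; rw [Units.val_pow_eq_pow_val, IsUnit.unit_spec, hcn, Units.val_one]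
    have hd1 : orderOf hu.unit ∣ n := orderOf_dvd_of_pow_eq_one hun
    have hd2 : orderOf hu.unit ∣ q.totient := by
      rw [← ZMod.card_units_eq_totient q]
      exact orderOf_dvd_card
    have : orderOf hu.unit = 1 := Nat.eq_one_of_dvd_coprimes hgcd hd1 hd2
    have : hu.unit = 1 := orderOf_eq_one_iff.mp this
    rw [← hu.unit_spec, this, Units.val_one]
  have hfix : ∀ (σ : K ≃ₐ[ℚ] K) (P : T), A σ P = P := by
    intro σ P
    apply e.injective
    have : e (A σ P) = g σ (e P) := by
      show _ = e (A σ (e.symm (e P)))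
      rw [e.symm_apply_apply]
    rw [this, hg, hc1, mul_one]
  ext P
  simp only [Submodule.mem_map, AddMonoidHom.coe_toIntLinearMap]
  constructor
  · intro hP
    have hfixP : ∀ σ : K ≃ₐ[ℚ] K, Affine.Point.map (W' := E) σ.toAlgHom P = P :=
      fun σ => congrArg Subtype.val (hfix σ ⟨P, hP⟩)
    have hdesc : ∃ Q : Affine.Point (E.baseChange ℚ), Affine.Point.map (W' := E) (Algebra.ofId ℚ K) Q = P := by
      cases P with
      | zero => exact ⟨0, rfl⟩
      | @some x y h =>
        have hx : ∀ σ : K ≃ₐ[ℚ] K, σ x = x := by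
          intro σ
          have := hfixP σ
          rw [Affine.Point.map_some] at this
          exact (Affine.Point.some.inj this).1
        have hy : ∀ σ : K ≃ₐ[ℚ] K, σ y = y := by
          intro σ
          have := hfixP σ
          rw [Affine.Point.map_some] at this
          exact (Affine.Point.some.inj this).2
        obtain ⟨x₀, hx₀⟩ := fixed_mem_range hx
        obtain ⟨y₀, hy₀⟩ := fixed_mem_range hy
        have h₀ : (E.baseChange ℚ).toAffine.Nonsingular x₀ y₀ := by
          apply (Affine.baseChange_nonsingular (W := E.toAffine) (Algebra.ofId ℚ K).injective x₀ y₀).mp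
          show (E.baseChange K).toAffine.Nonsingular (algebraMap ℚ K x₀) (algebraMap ℚ K y₀)
          rw [hx₀, hy₀]
          exact h
        refine ⟨Affine.Point.some _ _ h₀, ?_⟩
        rw [Affine.Point.map_some]
        simp only [Affine.Point.some.injEq]
        exact ⟨hx₀, hy₀⟩
    obtain ⟨Q, hQ⟩ := hdesc
    refine ⟨Q, ?_, hQ⟩
    rw [Submodule.mem_torsionBy_iff]
    apply Affine.Point.map_injective (W' := E) (Algebra.ofId ℚ K)
    rw [map_zsmul, hQ, map_zero]
    exact (Submodule.mem_torsionBy_iff _ _).mp hP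
  · rintro ⟨Q, hQ, rfl⟩
    rw [hT, Submodule.mem_torsionBy_iff, ← map_zsmul,
      (Submodule.mem_torsionBy_iff _ _).mp hQ, map_zero]
end

section
/- Let E be an elliptic curve over ℚ and let K be a Galois number field. If E(K)_tors ≅ ℤ/mℤ × ℤ/(mn)ℤ, then E admits a cyclic n-isogeny defined over ℚ; that is, there exists a Gal(ℚ̄/ℚ)-stable cyclic subgroup of E(ℚ̄) of order n. -/
open WeierstrassCurve WeierstrassCurve.Affine

open scoped Classical

/-- Chou: if `E(K)_tors ≅ ℤ/mℤ × ℤ/mnℤ` for a Galois number field `K`,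
then `E` admits a rational cyclic `n`-isogeny, i.e. a Galois-stable cyclic subgroup of
order `n` in `E(ℚ̄)`. -/
theorem statement10 (E : WeierstrassCurve ℚ) [E.IsElliptic]
    (K : Type) [Field K] [NumberField K] [IsGalois ℚ K] (m n : ℕ)
    (h : Nonempty ((AddCommGroup.torsion (E⁄K).Point) ≃+ (ZMod m × ZMod (m * n)))) :
    ∃ P : (E⁄(AlgebraicClosure ℚ)).Point, addOrderOf P = n ∧
      ∀ σ : AlgebraicClosure ℚ ≃ₐ[ℚ] AlgebraicClosure ℚ,
        AddSubgroup.map (Affine.Point.map (W' := E) σ.toAlgHom) (AddSubgroup.zmultiples P) =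
          AddSubgroup.zmultiples P := by
  obtain ⟨e⟩ := h
  set T := AddCommGroup.torsion (E⁄K).Point with hTdef
  set t : T := e.symm (0, 1) with ht
  have htfin : IsOfFinAddOrder ((t : (E⁄K).Point)) :=
    (AddCommGroup.mem_torsion _).1 t.2
  have horder_t : addOrderOf ((t : (E⁄K).Point)) = m * n := by
    rw [AddSubgroup.addOrderOf_coe, ht, AddEquiv.addOrderOf_eq,
      Prod.addOrderOf_mk, addOrderOf_zero, ZMod.addOrderOf_one, Nat.lcm_one_left]
  have hmn : m * n ≠ 0 := by
    rw [← horder_t]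
    exact htfin.addOrderOf_pos.ne'
  have hm : m ≠ 0 := fun h0 => hmn (by simp [h0])
  have hn : n ≠ 0 := fun h0 => hmn (by simp [h0])
  haveI : NeZero (m * n) := ⟨hmn⟩
  -- key: m • (any torsion point) lies in the cyclic group generated by m • t
  have key : ∀ x : (E⁄K).Point, IsOfFinAddOrder x →
      ∃ k : ℕ, m • x = k • (m • (t : (E⁄K).Point)) := by
    intro x hx
    have hxT : x ∈ T := (AddCommGroup.mem_torsion _).2 hx
    obtain ⟨k, hkb⟩ := ZMod.natCast_zmod_surjective (e ⟨x, hxT⟩).2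
    refine ⟨k, ?_⟩
    have hsub : m • (⟨x, hxT⟩ : T) = k • (m • t) := by
      apply e.injective
      rw [map_nsmul, map_nsmul, map_nsmul, ht, e.apply_symm_apply]
      ext
      · show m • (e ⟨x, hxT⟩).1 = k • (m • (0 : ZMod m))
        simp only [nsmul_eq_mul, ZMod.natCast_self, zero_mul, mul_zero, smul_zero]
      · show m • (e ⟨x, hxT⟩).2 = k • (m • (1 : ZMod (m * n)))
        rw [← hkb]
        simp only [nsmul_eq_mul]
        ring
    have := congrArg (Subtype.val) hsub
    simpa using this
  -- embed K into the algebraic closure of ℚ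
  haveI : Algebra.IsAlgebraic ℚ K := Algebra.IsAlgebraic.of_finite ℚ K
  let φ : K →ₐ[ℚ] AlgebraicClosure ℚ := IsAlgClosed.lift
  letI : Algebra K (AlgebraicClosure ℚ) := φ.toAlgebra
  haveI : IsScalarTower ℚ K (AlgebraicClosure ℚ) :=
    IsScalarTower.of_algebraMap_eq fun x => (φ.commutes x).symm
  set Q : (E⁄(AlgebraicClosure ℚ)).Point := Point.map (W' := E) φ (t : (E⁄K).Point) with hQ
  have hQorder : addOrderOf Q = m * n := by
    rw [hQ, addOrderOf_injective (Point.map (W' := E) φ) (Point.map_injective (W' := E) φ), horder_t]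
  refine ⟨m • Q, ?_, ?_⟩
  · rw [addOrderOf_nsmul' Q hm, hQorder, Nat.gcd_comm,
      Nat.gcd_eq_left (dvd_mul_right m n), Nat.mul_div_cancel_left n (Nat.pos_of_ne_zero hm)]
  · have hstab : ∀ σ : AlgebraicClosure ℚ ≃ₐ[ℚ] AlgebraicClosure ℚ,
        Point.map (W' := E) σ.toAlgHom (m • Q) ∈ AddSubgroup.zmultiples (m • Q) := by
      intro σ
      have hcomp : σ.toAlgHom.comp φ = φ.comp (σ.restrictNormal K).toAlgHom := by
        ext x
        exact (AlgEquiv.restrictNormal_commutes σ K x).symm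
      have hτfin : IsOfFinAddOrder
          (Point.map (W' := E) (σ.restrictNormal K).toAlgHom (t : (E⁄K).Point)) :=
        (Point.map (W' := E) (σ.restrictNormal K).toAlgHom).isOfFinAddOrder htfin
      obtain ⟨k, hk⟩ := key _ hτfin
      refine AddSubgroup.mem_zmultiples_iff.2 ⟨(k : ℤ), ?_⟩
      rw [natCast_zsmul]
      have h2 : Point.map (W' := E) σ.toAlgHom (m • Q) =
          Point.map (W' := E) φ (m • Point.map (W' := E) (σ.restrictNormal K).toAlgHom (t : (E⁄K).Point)) := by
        simp only [hQ, ← map_nsmul, Point.map_map, hcomp]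
      calc k • (m • Q) = Point.map (W' := E) φ (k • (m • (t : (E⁄K).Point))) := by
            simp only [hQ, ← map_nsmul]
        _ = Point.map (W' := E) φ (m • Point.map (W' := E) (σ.restrictNormal K).toAlgHom (t : (E⁄K).Point)) := by
            rw [← hk]
        _ = Point.map (W' := E) σ.toAlgHom (m • Q) := h2.symm
    intro σ
    apply le_antisymm
    · rw [AddMonoidHom.map_zmultiples]
      exact AddSubgroup.zmultiples_le_of_mem (hstab σ)
    · obtain ⟨j, hj⟩ := AddSubgroup.mem_zmultiples_iff.1 (hstab σ.symm)
      rw [AddMonoidHom.map_zmultiples]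
      refine AddSubgroup.zmultiples_le_of_mem (AddSubgroup.mem_zmultiples_iff.2 ⟨j, ?_⟩)
      rw [← map_zsmul (Point.map (W' := E) σ.toAlgHom) j (m • Q), hj, Point.map_map]
      have hid : σ.toAlgHom.comp σ.symm.toAlgHom = AlgHom.id ℚ (AlgebraicClosure ℚ) := by
        ext x
        simp
      rw [hid]
      cases m • Q <;> rfl
end

section
/- Let p > 3 be a prime with p ≡ 3 (mod 4), let E/ℚ be an elliptic curve with E(ℚ(ζ_p))_tors ≅ ℤ/16ℤ, and assume p − 1 is not divisible by 3, 4, or 5. Then E(ℚ(ζ_p))_tors = E(ℚ(√(−p)))_tors, i.e., all torsion points of E over ℚ(ζ_p) are already defined over the unique quadratic subfield ℚ(√(−p)). -/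
open WeierstrassCurve WeierstrassCurve.Affine

open Classical in
/-- if `p ≡ 3 (mod 4)`, `p - 1` is not divisible by `3`, `4` or `5`, and
`E(ℚ(ζ_p))_tors ≅ ℤ/16ℤ`, then all torsion points of `E` over `ℚ(ζ_p)` are defined over
the quadratic subfield `ℚ(√(-p))`. -/
theorem statement15 (p : ℕ) (hp : p.Prime) (hp3 : 3 < p) (hmod : p % 4 = 3)
    (h3 : ¬ 3 ∣ (p - 1)) (h4 : ¬ 4 ∣ (p - 1)) (h5 : ¬ 5 ∣ (p - 1))
    (E : WeierstrassCurve ℚ) [E.IsElliptic]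
    (htors : Nonempty
      ((AddCommGroup.torsion (E.baseChange (CyclotomicField p ℚ)).toAffine.Point) ≃+ ZMod 16)) :
    ∃ s : CyclotomicField p ℚ,
      s ^ 2 = -(p : CyclotomicField p ℚ) ∧
      ∀ P ∈ AddCommGroup.torsion (E.baseChange (CyclotomicField p ℚ)).toAffine.Point,
        P ∈ (Affine.Point.map (W' := E.toAffine) (IntermediateField.adjoin ℚ {s}).val).range := by
  classical
  haveI : Fact p.Prime := ⟨hp⟩
  haveI : NeZero p := ⟨hp.pos.ne'⟩
  haveI : NeZero (p : ℚ) := ⟨Nat.cast_ne_zero.mpr hp.pos.ne'⟩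
  set n : ℕ+ := ⟨p, hp.pos⟩ with hn
  set K := CyclotomicField p ℚ with hKdef
  haveI : IsCyclotomicExtension {p} ℚ K := CyclotomicField.isCyclotomicExtension p ℚ
  -- the primitive root and the Gauss sum
  have hζ := IsCyclotomicExtension.zeta_spec p ℚ K
  have hp2 : p ≠ 2 := by omega
  have hring2 : ringChar (ZMod p) ≠ 2 := by
    rw [ZMod.ringChar_zmod_n]; exact hp2
  let ψ : AddChar (ZMod p) K := AddChar.zmodChar p hζ.pow_eq_one
  let χ : MulChar (ZMod p) K := (quadraticChar (ZMod p)).ringHomComp (Int.castRingHom K)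
  have hχ1 : χ ≠ 1 :=
    (MulChar.ringHomComp_ne_one_iff (Int.cast_injective)).mpr (quadraticChar_ne_one hring2)
  have hχ2 : χ.IsQuadratic := (quadraticChar_isQuadratic (ZMod p)).comp _
  set s : K := gaussSum χ ψ with hsdef
  have hs2 : s ^ 2 = -(p : K) := by
    have hprim : ψ.IsPrimitive := AddChar.zmodChar_primitive_of_primitive_root p hζ
    have := gaussSum_sq hχ1 hχ2 hprim
    rw [hsdef, this]
    have hq : quadraticChar (ZMod p) (-1) = -1 := by
      rw [quadraticChar_neg_one hring2, ZMod.card p]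
      exact ZMod.χ₄_nat_three_mod_four hmod
    have : χ (-1) = -1 := by
      show ((quadraticChar (ZMod p) (-1) : ℤ) : K) = -1
      rw [hq]; push_cast; ring
    rw [this, ZMod.card p]; ring
  have hs0 : s ≠ 0 := by
    intro h
    rw [h] at hs2
    have : (p : K) = 0 := by
      rw [zero_pow (by norm_num)] at hs2
      exact neg_eq_zero.mp hs2.symm
    exact (Nat.cast_ne_zero.mpr hp.pos.ne' : (p : K) ≠ 0) this
  -- Galois theory setup
  haveI hgal : IsGalois ℚ K := IsCyclotomicExtension.isGalois {p} ℚ K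
  haveI hfd : FiniteDimensional ℚ K := IsCyclotomicExtension.finiteDimensional {p} ℚ K
  have hirr : Irreducible (Polynomial.cyclotomic p ℚ) :=
    Polynomial.cyclotomic.irreducible_rat hp.pos
  let eqv : (K ≃ₐ[ℚ] K) ≃* (ZMod p)ˣ := IsCyclotomicExtension.autEquivPow K hirr
  haveI : IsCyclic (K ≃ₐ[ℚ] K) := isCyclic_of_surjective eqv.symm eqv.symm.surjective
  have hcard : Fintype.card (K ≃ₐ[ℚ] K) = p - 1 := by
    rw [Fintype.card_congr eqv.toEquiv, ZMod.card_units p]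
  -- the torsion equivalence
  obtain ⟨e⟩ := htors
  set T := AddCommGroup.torsion (E.baseChange K).toAffine.Point with hT
  have hπT : ∀ (σ : K ≃ₐ[ℚ] K) (t : T), Point.map (W' := E.toAffine) σ.toAlgHom (t : (E.baseChange K).toAffine.Point) ∈ T :=
    fun σ t => (Point.map (W' := E.toAffine) σ.toAlgHom).isOfFinAddOrder t.2
  let φ : (K ≃ₐ[ℚ] K) → (ZMod 16 →+ ZMod 16) := fun σ =>
    e.toAddMonoidHom.comp
      ((((Point.map (W' := E.toAffine) σ.toAlgHom).comp T.subtype).codRestrict T (fun t => hπT σ t)).comp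
        e.symm.toAddMonoidHom)
  have hφapply : ∀ (σ : K ≃ₐ[ℚ] K) (x : ZMod 16),
      φ σ x = e ⟨Point.map (W' := E.toAffine) σ.toAlgHom ((e.symm x : T) : (E.baseChange K).toAffine.Point), hπT σ _⟩ := fun _ _ => rfl
  have hlin : ∀ (f : ZMod 16 →+ ZMod 16) (x : ZMod 16), f x = x * f 1 := by
    intro f x
    have h1 : ((x.val : ℕ) : ZMod 16) = x := by rw [ZMod.natCast_val, ZMod.cast_id]
    calc f x = f (x.val • (1 : ZMod 16)) := by rw [nsmul_eq_mul, mul_one, h1]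
      _ = x.val • f 1 := map_nsmul f _ _
      _ = x * f 1 := by rw [nsmul_eq_mul, h1]
  have hmapone : ∀ Q : (E.baseChange K).toAffine.Point, Point.map (W' := E.toAffine) (1 : K ≃ₐ[ℚ] K).toAlgHom Q = Q := by
    intro Q; cases Q <;> rfl
  have hcomp : ∀ (σ τ : K ≃ₐ[ℚ] K) (Q : (E.baseChange K).toAffine.Point),
      Point.map (W' := E.toAffine) (σ * τ).toAlgHom Q = Point.map (W' := E.toAffine) σ.toAlgHom (Point.map (W' := E.toAffine) τ.toAlgHom Q) := by
    intro σ τ Q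
    rw [Point.map_map]
    congr 1
  have hφmul : ∀ (σ τ : K ≃ₐ[ℚ] K) (x : ZMod 16), φ (σ * τ) x = φ σ (φ τ x) := by
    intro σ τ x
    rw [hφapply, hφapply, hφapply, AddEquiv.symm_apply_apply]
    congr 1
    exact Subtype.ext (hcomp σ τ _)
  have hφ1 : ∀ x : ZMod 16, φ (1 : K ≃ₐ[ℚ] K) x = x := by
    intro x
    rw [hφapply]
    have : (⟨Point.map (W' := E.toAffine) (1 : K ≃ₐ[ℚ] K).toAlgHom ((e.symm x : T) : (E.baseChange K).toAffine.Point), hπT _ _⟩ : T)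
        = e.symm x := Subtype.ext (hmapone _)
    rw [this, AddEquiv.apply_symm_apply]
  -- the multiplier
  let u : (K ≃ₐ[ℚ] K) → ZMod 16 := fun σ => φ σ 1
  have humul : ∀ σ τ : K ≃ₐ[ℚ] K, u (σ * τ) = u σ * u τ := by
    intro σ τ
    show φ (σ * τ) 1 = φ σ 1 * φ τ 1
    rw [hφmul, hlin (φ σ) (φ τ 1)]
    ring
  have hu1 : u 1 = 1 := hφ1 1
  have hupow : ∀ (τ : K ≃ₐ[ℚ] K) (k : ℕ), u (τ ^ k) = u τ ^ k := by
    intro τ k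
    induction k with
    | zero => simpa using hu1
    | succ m ih => rw [pow_succ, humul, ih, pow_succ]
  have huunit : ∀ τ : K ≃ₐ[ℚ] K, u τ * u τ⁻¹ = 1 := by
    intro τ
    rw [← humul, mul_inv_cancel, hu1]
  have hufin : ∀ τ : K ≃ₐ[ℚ] K, u τ ^ 2 = 1 := by
    intro τ
    let U : (ZMod 16)ˣ := ⟨u τ, u τ⁻¹, huunit τ, by rw [mul_comm]; exact huunit τ⟩
    have hUp : U ^ (p - 1) = 1 := by
      apply Units.ext
      show u τ ^ (p - 1) = 1
      rw [← hupow, ← hcard, pow_card_eq_one, hu1]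
    have hdvd1 : orderOf U ∣ p - 1 := orderOf_dvd_of_pow_eq_one hUp
    have hdvd8 : orderOf U ∣ 8 := by
      have h8 : Fintype.card (ZMod 16)ˣ = 8 := by
        rw [ZMod.card_units_eq_totient]; decide
      have := orderOf_dvd_card (x := U)
      rwa [h8] at this
    have hdvd2 : orderOf U ∣ 2 := by
      have h48 : (8 : ℕ) = 2 ^ 3 := by norm_num
      obtain ⟨k, hk, hek⟩ := (Nat.dvd_prime_pow Nat.prime_two).mp (h48 ▸ hdvd8)
      have hk1 : k ≤ 1 := by
        by_contra hk1
        exact h4 (dvd_trans (hek ▸ pow_dvd_pow 2 (by omega) : (2:ℕ)^2 ∣ orderOf U) hdvd1)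
      calc orderOf U = 2 ^ k := hek
        _ ∣ 2 ^ 1 := pow_dvd_pow 2 hk1
        _ = 2 := by norm_num
    have : U ^ 2 = 1 := orderOf_dvd_iff_pow_eq_one.mp hdvd2
    exact congrArg Units.val this
  -- generator of the Galois group and square decomposition
  obtain ⟨g, hg⟩ := IsCyclic.exists_monoid_generator (α := K ≃ₐ[ℚ] K)
  have hgs2 : ∀ σ : K ≃ₐ[ℚ] K, σ s = s ∨ σ s = -s := by
    intro σ
    have hsq : (σ s) ^ 2 = s ^ 2 := by
      rw [← map_pow, hs2, map_neg, map_natCast]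
    have h0 : (σ s - s) * (σ s + s) = 0 := by linear_combination hsq
    rcases mul_eq_zero.mp h0 with h | h
    · left; exact sub_eq_zero.mp h
    · right; exact eq_neg_of_add_eq_zero_left h
  have hgneg : g s = -s := by
    rcases hgs2 g with h | h
    · exfalso
      have hall : ∀ σ : K ≃ₐ[ℚ] K, σ s = s := by
        intro σ
        obtain ⟨k, hk⟩ := hg σ
        have hk' : g ^ k = σ := hk
        have : ∀ m : ℕ, (g ^ m) s = s := by
          intro m
          induction m with
          | zero => rfl
          | succ j ih => rw [pow_succ, AlgEquiv.mul_apply, h, ih]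
        rw [← hk']; exact this k
      have hbot : s ∈ (⊥ : IntermediateField ℚ K) := by
        have hmem : s ∈ IntermediateField.fixedField
            (IntermediateField.fixingSubgroup (⊥ : IntermediateField ℚ K)) := by
          rintro ⟨σ, _⟩
          exact hall σ
        rwa [IsGalois.fixedField_fixingSubgroup] at hmem
      obtain ⟨r, hr⟩ := IntermediateField.mem_bot.mp hbot
      have hrq : (r : ℚ) ^ 2 = -(p : ℚ) := by
        apply (algebraMap ℚ K).injective
        rw [map_pow, hr, hs2]
        push_cast
        ring
      have hppos : (0 : ℚ) < p := by exact_mod_cast hp.pos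
      nlinarith [sq_nonneg r]
    · exact h
  have hgpow : ∀ k : ℕ, (g ^ k) s = (-1 : K) ^ k * s := by
    intro k
    induction k with
    | zero => simp
    | succ j ih =>
      rw [pow_succ, AlgEquiv.mul_apply, hgneg, map_neg, ih, pow_succ]
      ring
  have hsquare : ∀ σ : K ≃ₐ[ℚ] K, σ s = s → ∃ τ : K ≃ₐ[ℚ] K, σ = τ * τ := by
    intro σ hσ
    obtain ⟨k, hk⟩ := hg σ
    have hk' : g ^ k = σ := hk
    have hks : (-1 : K) ^ k * s = s := by rw [← hgpow, hk', hσ]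
    have hk1 : (-1 : K) ^ k = 1 := by
      have := mul_right_cancel₀ hs0 (hks.trans (one_mul s).symm)
      exact this
    have hkeven : Even k := by
      rcases Nat.even_or_odd k with he | ho
      · exact he
      · exfalso
        rw [ho.neg_one_pow] at hk1
        norm_num at hk1
    obtain ⟨m, hm⟩ := hkeven
    exact ⟨g ^ m, by rw [← pow_add, ← hm, hk']⟩
  -- torsion points are fixed by automorphisms fixing s
  have key : ∀ (σ : K ≃ₐ[ℚ] K), σ s = s → ∀ P : (E.baseChange K).toAffine.Point, P ∈ T →
      Point.map (W' := E.toAffine) σ.toAlgHom P = P := by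
    intro σ hσ P hP
    obtain ⟨τ, rfl⟩ := hsquare σ hσ
    have h1 : u (τ * τ) = 1 := by
      rw [humul]
      have := hufin τ
      rw [pow_two] at this
      exact this
    have hx : φ (τ * τ) (e ⟨P, hP⟩) = e ⟨P, hP⟩ := by
      rw [hlin (φ (τ * τ)) (e ⟨P, hP⟩)]
      show e ⟨P, hP⟩ * u (τ * τ) = e ⟨P, hP⟩
      rw [h1, mul_one]
    rw [hφapply, AddEquiv.symm_apply_apply] at hx
    have := e.injective hx
    exact congrArg Subtype.val this
  -- conclusion
  refine ⟨s, hs2, ?_⟩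
  intro P hP
  set L := IntermediateField.adjoin ℚ {s} with hL
  cases P with
  | zero =>
    exact ⟨0, map_zero _⟩
  | @some x y hxy =>
    have hfix : ∀ σ ∈ L.fixingSubgroup, σ x = x ∧ σ y = y := by
      intro σ hσ
      have hσs : σ s = s :=
        (IntermediateField.mem_fixingSubgroup_iff L σ).mp hσ s
          (IntermediateField.mem_adjoin_simple_self ℚ s)
      have hfixP := key σ hσs _ hP
      rw [Point.map_some] at hfixP
      exact ⟨(Point.some.inj hfixP).1, (Point.some.inj hfixP).2⟩
    have hxL : x ∈ L := by
      have hmem : x ∈ IntermediateField.fixedField L.fixingSubgroup := by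
        rintro ⟨σ, hσ⟩
        exact (hfix σ hσ).1
      rwa [IsGalois.fixedField_fixingSubgroup] at hmem
    have hyL : y ∈ L := by
      have hmem : y ∈ IntermediateField.fixedField L.fixingSubgroup := by
        rintro ⟨σ, hσ⟩
        exact (hfix σ hσ).2
      rwa [IsGalois.fixedField_fixingSubgroup] at hmem
    have hns : (E.baseChange L).toAffine.Nonsingular (⟨x, hxL⟩ : L) (⟨y, hyL⟩ : L) :=
      (Affine.baseChange_nonsingular (W := E) (f := L.val) L.val.injective (⟨x, hxL⟩ : L) (⟨y, hyL⟩ : L)).mp hxy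
    exact ⟨Point.some _ _ hns, rfl⟩
end
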